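/- The index of U(ℤ) inside Γ_pa(q) ∩ U(ℚ) equals q; more precisely, Γ_pa(q) ∩ U(ℚ) consists exactly of elements n(x)·s([[a,b],[b,c]]) with x, b, c ∈ ℤ and a ∈ q⁻¹ℤ. -/

import Mathlib

open Matrix

abbrev M4 := Matrix (Fin 4) (Fin 4) ℚ

def Jmat : M4 := !![0,0,1,0; 0,0,0,1; -1,0,0,0; 0,-1,0,0]

def Sp4Q : Set M4 := {g | gᵀ * Jmat * g = Jmat}

def paraScale (q : ℕ) (i j : Fin 4) : ℚ :=
  if i = 0 ∧ j = 2 then (q : ℚ)⁻¹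
  else if (i = 1 ∧ j = 0) ∨ (i = 2 ∧ j = 0) ∨ (i = 2 ∧ j = 1) ∨ (i = 2 ∧ j = 3) ∨
      (i = 3 ∧ j = 0) then (q : ℚ)
  else 1

def Para (q : ℕ) : Set M4 :=
  {g | g ∈ Sp4Q ∧ ∀ i j, ∃ n : ℤ, g i j = paraScale q i j * n}

def nMat (x : ℚ) : M4 := !![1,x,0,0; 0,1,0,0; 0,0,1,0; 0,0,-x,1]

def sMat (a b c : ℚ) : M4 := !![1,0,a,b; 0,1,b,c; 0,0,1,0; 0,0,0,1]

def uMat (x a b c : ℚ) : M4 := nMat x * sMat a b c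

def UQ : Set M4 := {g | ∃ x a b c : ℚ, g = uMat x a b c}

def UZ : Set M4 := {g | ∃ x a b c : ℤ, g = uMat x a b c}

lemma uMat_eq (x a b c : ℚ) :
    uMat x a b c = !![1,x,a+x*b, b+x*c; 0,1,b,c; 0,0,1,0; 0,0,-x,1] := by
  ext i j
  fin_cases i <;> fin_cases j <;>
    (simp [uMat, nMat, sMat, Matrix.mul_apply, Fin.sum_univ_four,
      Matrix.vecHead, Matrix.vecTail]; try ring)

lemma uMat_mul (x a b c x' a' b' c' : ℚ) :
    uMat x a b c * uMat x' a' b' c' =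
      uMat (x+x') (a+a'-2*x'*b+x'^2*c) (b+b'-x'*c) (c+c') := by
  rw [uMat_eq, uMat_eq, uMat_eq]
  ext i j
  fin_cases i <;> fin_cases j <;>
    (simp [Matrix.mul_apply, Fin.sum_univ_four, Matrix.vecHead, Matrix.vecTail]; try ring)

lemma uMat_sp (x a b c : ℚ) : uMat x a b c ∈ Sp4Q := by
  show _ = _
  rw [uMat_eq]
  ext i j
  fin_cases i <;> fin_cases j <;>
    (simp [Jmat, Matrix.mul_apply, Fin.sum_univ_four, Matrix.vecHead, Matrix.vecTail,
      Matrix.transpose_apply]; try ring)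

lemma uMat_congr {x a b c x' a' b' c' : ℚ} (h1 : x = x') (h2 : a = a')
    (h3 : b = b') (h4 : c = c') : uMat x a b c = uMat x' a' b' c' := by
  subst h1 h2 h3 h4; rfl

lemma uMat_apply_01 (x a b c : ℚ) : uMat x a b c 0 1 = x := by rw [uMat_eq]; simp
lemma uMat_apply_02 (x a b c : ℚ) : uMat x a b c 0 2 = a + x*b := by rw [uMat_eq]; simp
lemma uMat_apply_12 (x a b c : ℚ) : uMat x a b c 1 2 = b := by rw [uMat_eq]; simp
lemma uMat_apply_13 (x a b c : ℚ) : uMat x a b c 1 3 = c := by rw [uMat_eq]; simp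

/-- characterization of Γ_pa(q) ∩ U(ℚ) -/
lemma char_lemma (q : ℕ) (hq : 0 < q) (g : M4) :
    (g ∈ Para q ∧ g ∈ UQ) ↔
      ∃ (x b c m : ℤ), g = uMat x ((m : ℚ)/q) b c := by
  have hq0 : (q : ℚ) ≠ 0 := Nat.cast_ne_zero.mpr hq.ne'
  constructor
  · rintro ⟨⟨-, hint⟩, x, a, b, c, rfl⟩
    obtain ⟨nx, hx⟩ := hint 0 1
    obtain ⟨nb, hb⟩ := hint 1 2
    obtain ⟨nc, hc⟩ := hint 1 3
    obtain ⟨na, ha⟩ := hint 0 2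
    rw [uMat_apply_01] at hx
    rw [uMat_apply_12] at hb
    rw [uMat_apply_13] at hc
    rw [uMat_apply_02] at ha
    simp [paraScale] at hx hb hc ha
    refine ⟨nx, nb, nc, na - q*nx*nb, ?_⟩
    subst hx hb hc
    have ha' : ((a + (nx:ℚ)*nb) * q : ℚ) = na := by rw [ha]; field_simp
    refine uMat_congr rfl ?_ rfl rfl
    push_cast
    rw [eq_div_iff hq0]
    linear_combination ha'
  · rintro ⟨x, b, c, m, rfl⟩
    refine ⟨⟨uMat_sp _ _ _ _, ?_⟩, _, _, _, _, rfl⟩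
    intro i j
    rw [uMat_eq]
    fin_cases i <;> fin_cases j <;>
      first
        | (refine ⟨1, ?_⟩; norm_num [paraScale, Fin.ext_iff, show ((3:Fin 4):ℕ) = 3 from rfl, show ((2:Fin 4):ℕ) = 2 from rfl, show ((1:Fin 4):ℕ) = 1 from rfl, Matrix.vecHead, Matrix.vecTail]; done)
        | (refine ⟨0, ?_⟩; norm_num [paraScale, Fin.ext_iff, show ((3:Fin 4):ℕ) = 3 from rfl, show ((2:Fin 4):ℕ) = 2 from rfl, show ((1:Fin 4):ℕ) = 1 from rfl, Matrix.vecHead, Matrix.vecTail]; done)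
        | (refine ⟨x, ?_⟩; norm_num [paraScale, Fin.ext_iff, show ((3:Fin 4):ℕ) = 3 from rfl, show ((2:Fin 4):ℕ) = 2 from rfl, show ((1:Fin 4):ℕ) = 1 from rfl, Matrix.vecHead, Matrix.vecTail]; done)
        | (refine ⟨-x, ?_⟩; norm_num [paraScale, Fin.ext_iff, show ((3:Fin 4):ℕ) = 3 from rfl, show ((2:Fin 4):ℕ) = 2 from rfl, show ((1:Fin 4):ℕ) = 1 from rfl, Matrix.vecHead, Matrix.vecTail] <;> (try push_cast) <;> (try ring); done)
        | (refine ⟨b, ?_⟩; norm_num [paraScale, Fin.ext_iff, show ((3:Fin 4):ℕ) = 3 from rfl, show ((2:Fin 4):ℕ) = 2 from rfl, show ((1:Fin 4):ℕ) = 1 from rfl, Matrix.vecHead, Matrix.vecTail]; done)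
        | (refine ⟨c, ?_⟩; norm_num [paraScale, Fin.ext_iff, show ((3:Fin 4):ℕ) = 3 from rfl, show ((2:Fin 4):ℕ) = 2 from rfl, show ((1:Fin 4):ℕ) = 1 from rfl, Matrix.vecHead, Matrix.vecTail]; done)
        | (refine ⟨b + x*c, ?_⟩; norm_num [paraScale, Fin.ext_iff, show ((3:Fin 4):ℕ) = 3 from rfl, show ((2:Fin 4):ℕ) = 2 from rfl, show ((1:Fin 4):ℕ) = 1 from rfl, Matrix.vecHead, Matrix.vecTail] <;> (try push_cast) <;> (try ring); done)
        | (refine ⟨m + q*x*b, ?_⟩; norm_num [paraScale, Fin.ext_iff, show ((3:Fin 4):ℕ) = 3 from rfl, show ((2:Fin 4):ℕ) = 2 from rfl, show ((1:Fin 4):ℕ) = 1 from rfl, Matrix.vecHead, Matrix.vecTail] <;> (try push_cast) <;> (try field_simp) <;> (try ring); done)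

/-- `Γ_pa(q) ∩ U(ℚ)` consists exactly of the elements `n(x)·s([[a,b],[b,c]])`
with `x, b, c ∈ ℤ` and `a ∈ q⁻¹ℤ`; moreover the index `[Γ_pa(q) ∩ U(ℚ) : U(ℤ)]`
equals `q` (the set of left cosets of `U(ℤ)` in `Γ_pa(q) ∩ U(ℚ)` has `q`
elements). -/
theorem stmt_3 (q : ℕ) (hq : 0 < q) :
    (∀ g : M4, (g ∈ Para q ∧ g ∈ UQ) ↔
      ∃ (x b c : ℤ) (a : ℚ), (∃ m : ℤ, a = (m : ℚ) / q) ∧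
        g = nMat x * sMat a b c) ∧
    Nat.card (Quot (fun (g h : {g : M4 // g ∈ Para q ∧ g ∈ UQ}) =>
      ∃ u ∈ UZ, (g : M4) = u * (h : M4))) = q := by
  have hq0 : (q : ℚ) ≠ 0 := Nat.cast_ne_zero.mpr hq.ne'
  have hiff : ∀ g : M4, (g ∈ Para q ∧ g ∈ UQ) ↔
      ∃ (x b c m : ℤ), g = uMat x ((m : ℚ)/q) b c := fun g => char_lemma q hq g
  constructor
  · intro g
    rw [hiff g]
    constructor
    · rintro ⟨x, b, c, m, rfl⟩
      exact ⟨x, b, c, (m:ℚ)/q, ⟨m, rfl⟩, rfl⟩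
    · rintro ⟨x, b, c, a, ⟨m, rfl⟩, rfl⟩
      exact ⟨x, b, c, m, rfl⟩
  · -- the coset count
    set S := {g : M4 // g ∈ Para q ∧ g ∈ UQ} with hS
    set r : S → S → Prop := fun g h => ∃ u ∈ UZ, (g : M4) = u * (h : M4) with hr
    set φ : S → ZMod q := fun g => (((q : ℚ) * (g : M4) 0 2).num : ZMod q) with hφ
    have key : ∀ (g : S) (x b c m : ℤ), (g : M4) = uMat x ((m:ℚ)/q) b c →
        φ g = (m : ZMod q) := by
      intro g x b c m hg
      have h02 : (g : M4) 0 2 = (m:ℚ)/q + x*b := by rw [hg, uMat_apply_02]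
      have h1 : (q : ℚ) * (g : M4) 0 2 = ((m + q*x*b : ℤ) : ℚ) := by
        rw [h02]; push_cast; field_simp
      rw [hφ]
      simp only [h1, Rat.num_intCast]
      push_cast
      simp
    have params : ∀ g : S, ∃ (x b c m : ℤ), (g : M4) = uMat x ((m:ℚ)/q) b c :=
      fun g => (hiff g).mp g.2
    -- well-definedness
    have hwd : ∀ g h : S, r g h → φ g = φ h := by
      rintro g h ⟨u, ⟨X, A, B, C, hu⟩, hgh⟩
      obtain ⟨xh, bh, ch, mh, hh⟩ := params h
      have hprod : (g : M4) = uMat ((X:ℚ)+xh)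
          ((A:ℚ) + (mh:ℚ)/q - 2*(xh:ℚ)*B + (xh:ℚ)^2*C) ((B:ℚ)+bh-(xh:ℚ)*C) ((C:ℚ)+ch) := by
        rw [hgh, hu, hh, uMat_mul]
      have hkey : φ g = ((mh + q*(A - 2*xh*B + xh^2*C) : ℤ) : ZMod q) := by
        apply key g (X+xh) (B+bh-xh*C) (C+ch)
        rw [hprod]
        refine uMat_congr (by push_cast; ring) ?_ (by push_cast; ring) (by push_cast; ring)
        push_cast
        field_simp
        ring
      rw [hkey, key h xh bh ch mh hh]
      push_cast
      simp
    set F : Quot r → ZMod q := Quot.lift φ hwd with hF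
    have hFinj : Function.Injective F := by
      intro p p'
      induction p using Quot.ind with | _ g => ?_
      induction p' using Quot.ind with | _ h => ?_
      intro hgh
      obtain ⟨xg, bg, cg, mg, hgp⟩ := params g
      obtain ⟨xh, bh, ch, mh, hhp⟩ := params h
      have hm : (mg : ZMod q) = (mh : ZMod q) := by
        rw [← key g xg bg cg mg hgp, ← key h xh bh ch mh hhp]
        exact hgh
      have hdvd : (q : ℤ) ∣ mg - mh := by
        rwa [← ZMod.intCast_zmod_eq_zero_iff_dvd, Int.cast_sub, sub_eq_zero]
      obtain ⟨t, ht⟩ := hdvd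
      apply Quot.sound
      refine ⟨uMat ((xg - xh : ℤ)) ((t + 2*xh*(bg - bh + xh*(cg - ch)) - xh^2*(cg-ch) : ℤ))
          ((bg - bh + xh*(cg - ch) : ℤ)) ((cg - ch : ℤ)),
        ⟨_, _, _, _, rfl⟩, ?_⟩
      rw [hgp, hhp, uMat_mul]
      refine uMat_congr (by push_cast; ring) ?_ (by push_cast; ring) (by push_cast; ring)
      have hmg : (mg : ℚ) = mh + q * t := by
        have h2 : mg = mh + q * t := by linarith [ht]
        rw [h2]; push_cast; ring
      rw [hmg]
      push_cast
      field_simp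
      ring
    have hFsurj : Function.Surjective F := by
      intro m
      obtain ⟨k, rfl⟩ := ZMod.intCast_surjective m
      have hg : uMat ((0:ℤ)) ((k:ℚ)/q) ((0:ℤ)) ((0:ℤ)) ∈ Para q ∧
          uMat ((0:ℤ)) ((k:ℚ)/q) ((0:ℤ)) ((0:ℤ)) ∈ UQ :=
        (hiff _).mpr ⟨0, 0, 0, k, rfl⟩
      exact ⟨Quot.mk r ⟨_, hg⟩, key ⟨_, hg⟩ 0 0 0 k rfl⟩
    rw [Nat.card_eq_of_bijective F ⟨hFinj, hFsurj⟩, Nat.card_zmod]
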